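/- If u^{(m+2,n)} = -(f/a)^{(m,n)} - u^{(m,n+2)} - Σ_{i=0}^{m} Σ_{j=0}^{n} C(m,i)C(n,j)[(a_x/a)^{(m-i,n-j)} u^{(i+1,j)} + (a_y/a)^{(m-i,n-j)} u^{(i,j+1)}] holds for all (m,n), then every partial derivative u^{(p,q)} with p+q ≤ M+1 can be written uniquely as a linear combination of the derivatives u^{(m,n)} with m ∈ {0,1} and m+n ≤ p+q, plus a linear combination of the derivatives f^{(m,n)} with m+n ≤ p+q-2, where the coefficients depend only on the partial derivatives of a of total order at most M. -/

import Mathlib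

/-- `Λ_K = {(m,n) ∈ ℕ² : m + n ≤ K}`. -/
def Lam (K : ℕ) : Finset (ℕ × ℕ) :=
  (Finset.range (K + 1) ×ˢ Finset.range (K + 1)).filter fun mn => mn.1 + mn.2 ≤ K

/-- `Λ_K^1 = {(m,n) ∈ Λ_K : m ∈ {0,1}}`. -/
def Lam1 (K : ℕ) : Finset (ℕ × ℕ) := (Lam K).filter fun mn => mn.1 ≤ 1

/-- `Λ_{K-2} = {(m,n) ∈ ℕ² : m + n + 2 ≤ K}` (empty when `K < 2`). -/
def LamSub2 (K : ℕ) : Finset (ℕ × ℕ) :=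
  (Finset.range (K + 1) ×ˢ Finset.range (K + 1)).filter fun mn => mn.1 + mn.2 + 2 ≤ K

/-- The recursion `u^{(m+2,n)} = -(f/a)^{(m,n)} - u^{(m,n+2)}
  - Σ_{i,j} C(m,i)C(n,j)[(a_x/a)^{(m-i,n-j)} u^{(i+1,j)} + (a_y/a)^{(m-i,n-j)} u^{(i,j+1)}]`,
where `cx`, `cy`, `F` encode the derivative arrays of `a_x/a`, `a_y/a` and `f/a`. -/
def SatisfiesRec (cx cy F u : ℕ × ℕ → ℝ) : Prop :=
  ∀ m n : ℕ,
    u (m + 2, n) = -F (m, n) - u (m, n + 2) -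
      ∑ i ∈ Finset.range (m + 1), ∑ j ∈ Finset.range (n + 1),
        (m.choose i : ℝ) * (n.choose j : ℝ) *
          (cx (m - i, n - j) * u (i + 1, j) + cy (m - i, n - j) * u (i, j + 1))

noncomputable def U (cx cy g F : ℕ × ℕ → ℝ) : ℕ → ℕ → ℝ
  | 0, n => g (0, n)
  | 1, n => g (1, n)
  | (m+2), n =>
    -F (m, n) - U cx cy g F m (n + 2) -
      ∑ i ∈ (Finset.range (m + 1)).attach, ∑ j ∈ Finset.range (n + 1),
        (m.choose i.1 : ℝ) * (n.choose j : ℝ) *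
          (cx (m - i.1, n - j) * U cx cy g F (i.1 + 1) j +
           cy (m - i.1, n - j) * U cx cy g F i.1 (j + 1))
  termination_by m _ => m
  decreasing_by
  · omega
  · obtain ⟨i, hi⟩ := i; simp only [Finset.mem_range] at hi; simpa using by omega
  · obtain ⟨i, hi⟩ := i; simp only [Finset.mem_range] at hi; simpa using by omega

theorem U_step (cx cy g F : ℕ × ℕ → ℝ) (m n : ℕ) :
    U cx cy g F (m+2) n =
      -F (m, n) - U cx cy g F m (n + 2) -
      ∑ i ∈ Finset.range (m + 1), ∑ j ∈ Finset.range (n + 1),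
        (m.choose i : ℝ) * (n.choose j : ℝ) *
          (cx (m - i, n - j) * U cx cy g F (i + 1) j +
           cy (m - i, n - j) * U cx cy g F i (j + 1)) := by
  rw [U]
  rw [Finset.sum_attach (Finset.range (m+1)) (fun i => ∑ j ∈ Finset.range (n + 1),
        (m.choose i : ℝ) * (n.choose j : ℝ) *
          (cx (m - i, n - j) * U cx cy g F (i + 1) j +
           cy (m - i, n - j) * U cx cy g F i (j + 1)))]

theorem U_zero' (cx cy : ℕ × ℕ → ℝ) : ∀ p q, U cx cy (fun _ => 0) (fun _ => 0) p q = 0 := by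
  intro p
  induction p using Nat.strong_induction_on with
  | _ p ih =>
    match p with
    | 0 => intro q; simp [U]
    | 1 => intro q; simp [U]
    | (m+2) =>
      intro q
      rw [U_step]
      rw [ih m (by omega) (q+2)]
      have : ∀ i ∈ Finset.range (m+1), ∀ j ∈ Finset.range (q+1),
          (m.choose i : ℝ) * (q.choose j : ℝ) *
          (cx (m - i, q - j) * U cx cy (fun _ => 0) (fun _ => 0) (i + 1) j +
           cy (m - i, q - j) * U cx cy (fun _ => 0) (fun _ => 0) i (j + 1)) = 0 := by
        intro i hi j hj
        simp only [Finset.mem_range] at hi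
        rw [ih (i+1) (by omega) j, ih i (by omega) (j+1)]
        ring
      rw [Finset.sum_congr rfl (fun i hi => Finset.sum_congr rfl (fun j hj => this i hi j hj))]
      simp

theorem U_add (cx cy g g' F F' : ℕ × ℕ → ℝ) :
    ∀ p q, U cx cy (fun mn => g mn + g' mn) (fun mn => F mn + F' mn) p q
      = U cx cy g F p q + U cx cy g' F' p q := by
  intro p
  induction p using Nat.strong_induction_on with
  | _ p ih =>
    match p with
    | 0 => intro q; simp [U]
    | 1 => intro q; simp [U]
    | (m+2) =>
      intro q
      rw [U_step, U_step, U_step, ih m (by omega) (q+2)]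
      have : ∀ i ∈ Finset.range (m+1), ∀ j ∈ Finset.range (q+1),
          (m.choose i : ℝ) * (q.choose j : ℝ) *
          (cx (m - i, q - j) * U cx cy (fun mn => g mn + g' mn) (fun mn => F mn + F' mn) (i + 1) j +
           cy (m - i, q - j) * U cx cy (fun mn => g mn + g' mn) (fun mn => F mn + F' mn) i (j + 1))
          = ((m.choose i : ℝ) * (q.choose j : ℝ) *
          (cx (m - i, q - j) * U cx cy g F (i + 1) j + cy (m - i, q - j) * U cx cy g F i (j + 1)))
          + ((m.choose i : ℝ) * (q.choose j : ℝ) *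
          (cx (m - i, q - j) * U cx cy g' F' (i + 1) j + cy (m - i, q - j) * U cx cy g' F' i (j + 1))) := by
        intro i hi j hj
        simp only [Finset.mem_range] at hi
        rw [ih (i+1) (by omega) j, ih i (by omega) (j+1)]
        ring
      rw [Finset.sum_congr rfl (fun i hi => Finset.sum_congr rfl (fun j hj => this i hi j hj))]
      rw [Finset.sum_congr rfl (fun i (hi : i ∈ Finset.range (m+1)) => Finset.sum_add_distrib)]
      rw [Finset.sum_add_distrib]
      ring

theorem U_smul (cx cy g F : ℕ × ℕ → ℝ) (r : ℝ) :
    ∀ p q, U cx cy (fun mn => r * g mn) (fun mn => r * F mn) p q = r * U cx cy g F p q := by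
  intro p
  induction p using Nat.strong_induction_on with
  | _ p ih =>
    match p with
    | 0 => intro q; simp [U]
    | 1 => intro q; simp [U]
    | (m+2) =>
      intro q
      rw [U_step, U_step, ih m (by omega) (q+2)]
      have : ∀ i ∈ Finset.range (m+1), ∀ j ∈ Finset.range (q+1),
          (m.choose i : ℝ) * (q.choose j : ℝ) *
          (cx (m - i, q - j) * U cx cy (fun mn => r * g mn) (fun mn => r * F mn) (i + 1) j +
           cy (m - i, q - j) * U cx cy (fun mn => r * g mn) (fun mn => r * F mn) i (j + 1))
          = r * ((m.choose i : ℝ) * (q.choose j : ℝ) *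
          (cx (m - i, q - j) * U cx cy g F (i + 1) j + cy (m - i, q - j) * U cx cy g F i (j + 1))) := by
        intro i hi j hj
        simp only [Finset.mem_range] at hi
        rw [ih (i+1) (by omega) j, ih i (by omega) (j+1)]
        ring
      rw [Finset.sum_congr rfl (fun i hi => Finset.sum_congr rfl (fun j hj => this i hi j hj))]
      rw [Finset.sum_congr rfl (fun i (hi : i ∈ Finset.range (m+1)) => (Finset.mul_sum _ _ _).symm)]
      rw [← Finset.mul_sum]
      ring

theorem U_local (cx cy g g' F F' : ℕ × ℕ → ℝ) (K : ℕ)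
    (hg : ∀ mn : ℕ × ℕ, mn.1 ≤ 1 → mn.1 + mn.2 ≤ K → g mn = g' mn)
    (hF : ∀ mn : ℕ × ℕ, mn.1 + mn.2 + 2 ≤ K → F mn = F' mn) :
    ∀ p q, p + q ≤ K → U cx cy g F p q = U cx cy g' F' p q := by
  intro p
  induction p using Nat.strong_induction_on with
  | _ p ih =>
    match p with
    | 0 => intro q hq; simp only [U]; exact hg (0, q) (by omega) (by omega)
    | 1 => intro q hq; simp only [U]; exact hg (1, q) (by omega) (by omega)
    | (m+2) =>
      intro q hq
      rw [U_step, U_step, ih m (by omega) (q+2) (by omega), hF (m, q) (by omega)]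
      have : ∀ i ∈ Finset.range (m+1), ∀ j ∈ Finset.range (q+1),
          (m.choose i : ℝ) * (q.choose j : ℝ) *
          (cx (m - i, q - j) * U cx cy g F (i + 1) j + cy (m - i, q - j) * U cx cy g F i (j + 1))
          = (m.choose i : ℝ) * (q.choose j : ℝ) *
          (cx (m - i, q - j) * U cx cy g' F' (i + 1) j + cy (m - i, q - j) * U cx cy g' F' i (j + 1)) := by
        intro i hi j hj
        simp only [Finset.mem_range] at hi hj
        rw [ih (i+1) (by omega) j (by omega), ih i (by omega) (j+1) (by omega)]
      rw [Finset.sum_congr rfl (fun i hi => Finset.sum_congr rfl (fun j hj => this i hi j hj))]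

noncomputable def dd (kl : ℕ × ℕ) : ℕ × ℕ → ℝ := fun mn => if mn = kl then 1 else 0

theorem U_sum (cx cy : ℕ × ℕ → ℝ) {ι : Type*} [DecidableEq ι] (s : Finset ι) (G H : ι → (ℕ × ℕ) → ℝ) (p q : ℕ) :
    U cx cy (fun mn => ∑ i ∈ s, G i mn) (fun mn => ∑ i ∈ s, H i mn) p q
      = ∑ i ∈ s, U cx cy (G i) (H i) p q := by
  induction s using Finset.induction_on with
  | empty => simpa using U_zero' cx cy p q
  | insert a s ha ih =>
    simp only [Finset.sum_insert ha]
    rw [U_add cx cy (G a) (fun mn => ∑ i ∈ s, G i mn) (H a) (fun mn => ∑ i ∈ s, H i mn) p q, ih]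

theorem U_expand (cx cy g F : ℕ × ℕ → ℝ) (p q : ℕ) :
    U cx cy g F p q =
      (∑ mn ∈ Lam1 (p + q), g mn * U cx cy (dd mn) (fun _ => 0) p q) +
      ∑ mn ∈ LamSub2 (p + q), F mn * U cx cy (fun _ => 0) (dd mn) p q := by
  have memL1 : ∀ (K : ℕ) (mn : ℕ × ℕ), mn ∈ Lam1 K ↔ mn.1 ≤ 1 ∧ mn.1 + mn.2 ≤ K := by
    intro K mn
    simp only [Lam1, Lam, Finset.mem_filter, Finset.mem_product, Finset.mem_range]
    omega
  have memL2 : ∀ (K : ℕ) (mn : ℕ × ℕ), mn ∈ LamSub2 K ↔ mn.1 + mn.2 + 2 ≤ K := by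
    intro K mn
    simp only [LamSub2, Finset.mem_filter, Finset.mem_product, Finset.mem_range]
    omega
  have h1 : U cx cy g F p q
      = U cx cy (fun mn => ∑ kl ∈ Lam1 (p + q), g kl * dd kl mn)
               (fun mn => ∑ kl ∈ LamSub2 (p + q), F kl * dd kl mn) p q := by
    apply U_local cx cy _ _ _ _ (p + q) _ _ p q le_rfl
    · intro mn h1 h2
      simp only [dd, mul_ite, mul_one, mul_zero]
      rw [Finset.sum_ite_eq (Lam1 (p + q)) mn g]
      simp [(memL1 (p+q) mn).2 ⟨h1, h2⟩]
    · intro mn h1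
      simp only [dd, mul_ite, mul_one, mul_zero]
      rw [Finset.sum_ite_eq (LamSub2 (p + q)) mn F]
      simp [(memL2 (p+q) mn).2 h1]
  rw [h1]
  have h2 := U_add cx cy (fun mn => ∑ kl ∈ Lam1 (p + q), g kl * dd kl mn) (fun _ => 0)
      (fun _ => 0) (fun mn => ∑ kl ∈ LamSub2 (p + q), F kl * dd kl mn) p q
  simp only [add_zero, zero_add] at h2
  rw [h2]
  congr 1
  · have := U_sum cx cy (Lam1 (p + q)) (fun kl mn => g kl * dd kl mn) (fun kl mn => (0:ℝ)) p q
    simp only [Finset.sum_const_zero] at this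
    rw [this]
    refine Finset.sum_congr rfl fun kl _ => ?_
    have := U_smul cx cy (dd kl) (fun _ => 0) (g kl) p q
    simp only [mul_zero] at this
    rw [← this]
  · have := U_sum cx cy (LamSub2 (p + q)) (fun kl mn => (0:ℝ)) (fun kl mn => F kl * dd kl mn) p q
    simp only [Finset.sum_const_zero] at this
    rw [this]
    refine Finset.sum_congr rfl fun kl _ => ?_
    have := U_smul cx cy (fun _ => 0) (dd kl) (F kl) p q
    simp only [mul_zero] at this
    rw [← this]

theorem U_sat (cx cy g F : ℕ × ℕ → ℝ) :
    SatisfiesRec cx cy F (fun mn => U cx cy g F mn.1 mn.2) := by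
  intro m n
  exact U_step cx cy g F m n

theorem eq_U (cx cy F u : ℕ × ℕ → ℝ) (hu : SatisfiesRec cx cy F u) :
    ∀ p q, u (p, q) = U cx cy (fun mn => u mn) F p q := by
  intro p
  induction p using Nat.strong_induction_on with
  | _ p ih =>
    match p with
    | 0 => intro q; simp [U]
    | 1 => intro q; simp [U]
    | (m+2) =>
      intro q
      rw [hu m q, U_step, ih m (by omega) (q+2)]
      congr 1
      refine Finset.sum_congr rfl fun i hi => Finset.sum_congr rfl fun j hj => ?_
      simp only [Finset.mem_range] at hi
      rw [ih (i+1) (by omega) j, ih i (by omega) (j+1)]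

theorem U_low (cx cy g F : ℕ × ℕ → ℝ) (p q : ℕ) (hp : p ≤ 1) : U cx cy g F p q = g (p, q) := by
  match p with
  | 0 => simp [U]
  | 1 => simp [U]

theorem memL1 (K : ℕ) (mn : ℕ × ℕ) : mn ∈ Lam1 K ↔ mn.1 ≤ 1 ∧ mn.1 + mn.2 ≤ K := by
  simp only [Lam1, Lam, Finset.mem_filter, Finset.mem_product, Finset.mem_range]
  omega

theorem memL2 (K : ℕ) (mn : ℕ × ℕ) : mn ∈ LamSub2 K ↔ mn.1 + mn.2 + 2 ≤ K := by
  simp only [LamSub2, Finset.mem_filter, Finset.mem_product, Finset.mem_range]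
  omega


/-- Every `u^{(p,q)}` with `p+q ≤ M+1` is uniquely a linear combination of the `u^{(m,n)}`,
`m ∈ {0,1}`, `m+n ≤ p+q`, plus a linear combination of the `f^{(m,n)}`, `m+n ≤ p+q-2`,
with coefficients depending only on the derivative data of `a` (through `cx`, `cy`). -/
theorem stmt1 (M : ℕ) (cx cy : ℕ × ℕ → ℝ) :
    ∃! c : ((ℕ × ℕ) → (ℕ × ℕ) → ℝ) × ((ℕ × ℕ) → (ℕ × ℕ) → ℝ),
      (∀ pq mn : ℕ × ℕ, mn ∉ Lam1 (pq.1 + pq.2) → c.1 pq mn = 0) ∧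
      (∀ pq mn : ℕ × ℕ, ¬ (mn.1 + mn.2 + 2 ≤ pq.1 + pq.2) → c.2 pq mn = 0) ∧
      (∀ pq mn : ℕ × ℕ, pq ∉ Lam (M + 1) → c.1 pq mn = 0 ∧ c.2 pq mn = 0) ∧
      (∀ u F : ℕ × ℕ → ℝ, SatisfiesRec cx cy F u →
        ∀ pq ∈ Lam (M + 1),
          u pq = (∑ mn ∈ Lam1 (pq.1 + pq.2), c.1 pq mn * u mn) +
                 ∑ mn ∈ LamSub2 (pq.1 + pq.2), c.2 pq mn * F mn) := by
  classical
  refine ⟨(fun pq mn => if pq ∈ Lam (M+1) ∧ mn ∈ Lam1 (pq.1 + pq.2)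
              then U cx cy (dd mn) (fun _ => 0) pq.1 pq.2 else 0,
           fun pq mn => if pq ∈ Lam (M+1) ∧ mn.1 + mn.2 + 2 ≤ pq.1 + pq.2
              then U cx cy (fun _ => 0) (dd mn) pq.1 pq.2 else 0),
    ⟨?_, ?_, ?_, ?_⟩, ?_⟩
  · intro pq mn h; simp only; rw [if_neg (by tauto)]
  · intro pq mn h; simp only; rw [if_neg (by tauto)]
  · intro pq mn h
    constructor <;> (simp only; rw [if_neg (by tauto)])
  · intro u F hu pq hpq
    have : u pq = u (pq.1, pq.2) := by rfl
    rw [this, eq_U cx cy F u hu pq.1 pq.2, U_expand]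
    congr 1
    · refine Finset.sum_congr rfl fun mn hmn => ?_
      simp only
      rw [if_pos ⟨hpq, hmn⟩, mul_comm]
    · refine Finset.sum_congr rfl fun mn hmn => ?_
      simp only
      rw [if_pos ⟨hpq, (memL2 _ mn).1 hmn⟩, mul_comm]
  · rintro ⟨c1, c2⟩ ⟨h1, h2, h3, h4⟩
    dsimp only at h1 h2 h3 h4
    have key1 : ∀ pq mn : ℕ × ℕ, c1 pq mn =
        (if pq ∈ Lam (M+1) ∧ mn ∈ Lam1 (pq.1 + pq.2)
          then U cx cy (dd mn) (fun _ => 0) pq.1 pq.2 else 0) := by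
      intro pq mn
      by_cases hpq : pq ∈ Lam (M+1)
      · by_cases hmn : mn ∈ Lam1 (pq.1 + pq.2)
        · rw [if_pos ⟨hpq, hmn⟩]
          have hsat := U_sat cx cy (dd mn) (fun _ => 0)
          have hrep := h4 _ _ hsat pq hpq
          have e1 : ∀ mn' ∈ Lam1 (pq.1 + pq.2),
              c1 pq mn' * (fun kl : ℕ × ℕ => U cx cy (dd mn) (fun _ => 0) kl.1 kl.2) mn'
              = if mn' = mn then c1 pq mn' else 0 := by
            intro mn' h
            simp only
            rw [U_low cx cy (dd mn) (fun _ => 0) mn'.1 mn'.2 ((memL1 _ mn').1 h).1]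
            simp [dd]
          rw [Finset.sum_congr rfl e1] at hrep
          rw [Finset.sum_ite_eq' (Lam1 (pq.1 + pq.2)) mn (c1 pq), if_pos hmn] at hrep
          simp only [mul_zero, Finset.sum_const_zero, add_zero] at hrep
          exact hrep.symm
        · rw [h1 pq mn hmn, if_neg (by tauto)]
      · rw [(h3 pq mn hpq).1, if_neg (by tauto)]
    have key2 : ∀ pq mn : ℕ × ℕ, c2 pq mn =
        (if pq ∈ Lam (M+1) ∧ mn.1 + mn.2 + 2 ≤ pq.1 + pq.2
          then U cx cy (fun _ => 0) (dd mn) pq.1 pq.2 else 0) := by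
      intro pq mn
      by_cases hpq : pq ∈ Lam (M+1)
      · by_cases hmn : mn.1 + mn.2 + 2 ≤ pq.1 + pq.2
        · rw [if_pos ⟨hpq, hmn⟩]
          have hsat := U_sat cx cy (fun _ => 0) (dd mn)
          have hrep := h4 _ _ hsat pq hpq
          have e1 : ∀ mn' ∈ Lam1 (pq.1 + pq.2),
              c1 pq mn' * (fun kl : ℕ × ℕ => U cx cy (fun _ => 0) (dd mn) kl.1 kl.2) mn'
              = 0 := by
            intro mn' h
            simp only
            rw [U_low cx cy (fun _ => 0) (dd mn) mn'.1 mn'.2 ((memL1 _ mn').1 h).1]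
            simp
          rw [Finset.sum_congr rfl e1] at hrep
          have e2 : ∀ mn' ∈ LamSub2 (pq.1 + pq.2),
              c2 pq mn' * dd mn mn' = if mn' = mn then c2 pq mn' else 0 := by
            intro mn' h
            simp [dd]
          rw [Finset.sum_congr rfl e2] at hrep
          rw [Finset.sum_ite_eq' (LamSub2 (pq.1 + pq.2)) mn (c2 pq),
            if_pos ((memL2 _ mn).2 hmn)] at hrep
          simp only [Finset.sum_const_zero, zero_add] at hrep
          exact hrep.symm
        · rw [h2 pq mn hmn, if_neg (by tauto)]
      · rw [(h3 pq mn hpq).2, if_neg (by tauto)]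
    refine Prod.ext ?_ ?_
    · funext pq mn; exact key1 pq mn
    · funext pq mn; exact key2 pq mn
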